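/- Let A_Γ be a T-algebra on Γ = 2^{<ω₁} (so that X(Γ) = 2^{ω₁}), and suppose that in the Stone topology on X(Γ) no injective sequence converges. Then for every x ∈ 2^{ω₁}, the space Y_x — the set ω₁ with the subspace topology inherited from (ω₁+1, τ(A_{Γ,x})) — is sequentially compact: every sequence in Y_x has a subsequence converging to a point of Y_x. -/

import Mathlib

open Set

noncomputable section

/-- The least uncountable ordinal `ω₁`. -/
def omega1 : Ordinal := (Cardinal.aleph 1).ord

/-- `⋃_{γ ∈ F} a_γ` for a finite set `F` of indices. -/
def unionFin (a : Ordinal → Set ℕ) (F : Finset Ordinal) : Set ℕ :=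
  ⋃ γ ∈ F, a γ

/-- A sequence of subsets of `ℕ`, with indices from a (downward closed) domain `D`
of ordinals, is coherent if for all `α ≤ β` in the domain there is a finite `F ⊆ α`
with `a α ∩ a β ⊆ ⋃_{γ∈F} a γ` or `a α ⊆ a β ∪ ⋃_{γ∈F} a γ`. -/
def CoherentOn (D : Set Ordinal) (a : Ordinal → Set ℕ) : Prop :=
  ∀ α β : Ordinal, α ≤ β → β ∈ D →
    ∃ F : Finset Ordinal, (∀ γ ∈ F, γ < α) ∧
      (a α ∩ a β ⊆ unionFin a F ∨ a α ⊆ a β ∪ unionFin a F)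

/-- Properness: no `a β` is contained in a finite union of earlier terms. -/
def ProperOn (D : Set Ordinal) (a : Ordinal → Set ℕ) : Prop :=
  ∀ β ∈ D, ∀ F : Finset Ordinal, (∀ γ ∈ F, γ < β) → ¬ a β ⊆ unionFin a F

/-- `â_β = { α ≤ β : a α ∖ a β ⊆ ⋃_{γ∈F} a γ for some finite F ⊆ α }`. -/
def hatA (a : Ordinal → Set ℕ) (β : Ordinal) : Set Ordinal :=
  { α | α ≤ β ∧ ∃ F : Finset Ordinal, (∀ γ ∈ F, γ < α) ∧ a α \ a β ⊆ unionFin a F }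

/-- The topology `τ(A)` on `λ + 1 = {α : α ≤ λ}` generated by the subbase
consisting of the sets `â_β` and their complements, `β < λ`. -/
def tau (lam : Ordinal) (a : Ordinal → Set ℕ) :
    TopologicalSpace {α : Ordinal // α ≤ lam} :=
  TopologicalSpace.generateFrom
    { s | ∃ β < lam, s = {x : {α : Ordinal // α ≤ lam} | x.1 ∈ hatA a β} ∨
                     s = {x : {α : Ordinal // α ≤ lam} | x.1 ∈ hatA a β}ᶜ }

/-- The subspace `ω₁ = {α : α < ω₁}` of `(ω₁+1, τ(A))`. -/
def tauSub (a : Ordinal → Set ℕ) : TopologicalSpace {y : Ordinal // y < omega1} :=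
  TopologicalSpace.induced
    (fun y : {y : Ordinal // y < omega1} => (⟨y.1, y.2.le⟩ : {α : Ordinal // α ≤ omega1}))
    (tau omega1 a)

/-- Closed unbounded subsets of `ω₁`. -/
def IsClubOmega1 (C : Set Ordinal) : Prop :=
  C ⊆ Iio omega1 ∧
  (∀ α < omega1, ∃ β ∈ C, α ≤ β) ∧
  (∀ δ, δ < omega1 → δ ≠ 0 → (∀ α < δ, ∃ β ∈ C, α < β ∧ β < δ) → δ ∈ C)

/-- Stationary subsets of `ω₁`: sets meeting every club. -/
def IsStationaryOmega1 (S : Set Ordinal) : Prop :=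
  ∀ C : Set Ordinal, IsClubOmega1 C → (S ∩ C).Nonempty

/-- The stationary covering property for a coherent sequence whose index domain is `D`:
if the sequence has length `ω₁` (i.e. `Iio ω₁ ⊆ D`), then every stationary `S ⊆ ω₁`
together with some finite `F` covers, i.e. `⋃_{γ ∈ S ∪ F} â_γ = ω₁`.  (Sequences of
length `< ω₁` have the ScP by convention.) -/
def HasScP (D : Set Ordinal) (a : Ordinal → Set ℕ) : Prop :=
  Iio omega1 ⊆ D →
    ∀ S : Set Ordinal, S ⊆ Iio omega1 → IsStationaryOmega1 S →
      ∃ F : Finset Ordinal, (⋃ γ ∈ S ∪ (↑F : Set Ordinal), hatA a γ) = Iio omega1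

/-- A node of the tree `2^{≤ω₁}`: a function `val` defined on the ordinals `< len`
(with the canonical value `false` beyond `len`). -/
structure Node where
  len : Ordinal
  val : Ordinal → Bool
  canon : ∀ α, len ≤ α → val α = false

open Classical in
/-- The restriction `x ↾ β`. -/
def Node.restrict (x : Node) (β : Ordinal) : Node where
  len := β
  val := fun α => if α < β then x.val α else false
  canon := fun α h => if_neg (not_lt.2 h)

/-- `τ.Extends σ` means `σ ⊆ τ`, i.e. `τ` extends `σ`. -/
def Node.Extends (τ σ : Node) : Prop :=
  σ.len ≤ τ.len ∧ ∀ α < σ.len, τ.val α = σ.val α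

/-- Successor ordinals. -/
def IsSucc (o : Ordinal) : Prop := ∃ β, o = β + 1

open Classical in
/-- `σ†`: if `σ` has successor length `β+1`, the node agreeing with `σ` except at `β`;
otherwise `σ` itself. -/
def Node.dagger (σ : Node) : Node :=
  if h : IsSucc σ.len then
    { len := σ.len
      val := fun α => if α = Classical.choose h then !(σ.val α) else σ.val α
      canon := by
        intro α hα
        have hs := Classical.choose_spec h
        have hne : α ≠ Classical.choose h := by
          intro he
          rw [hs, he] at hα
          rw [Ordinal.add_one_eq_succ] at hα
          exact (not_le.2 (Order.lt_succ (Classical.choose h))) hα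
        show (if α = Classical.choose h then !(σ.val α) else σ.val α) = false
        rw [if_neg hne]
        exact σ.canon α hα }
  else σ

open Classical in
/-- `σ ⌢ b` : the node `σ` extended by one value `b`. -/
def Node.snoc (σ : Node) (b : Bool) : Node where
  len := σ.len + 1
  val := fun α => if α = σ.len then b else σ.val α
  canon := by
    intro α hα
    have h1 : σ.len < α := by
      have h2 : σ.len < σ.len + 1 := by
        rw [Ordinal.add_one_eq_succ]; exact Order.lt_succ σ.len
      exact lt_of_lt_of_le h2 hα
    show (if α = σ.len then b else σ.val α) = false
    rw [if_neg h1.ne']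
    exact σ.canon α h1.le

open Classical in
/-- `x ⌢ σ` : concatenation of nodes. -/
def Node.append (x σ : Node) : Node where
  len := x.len + σ.len
  val := fun α => if α < x.len then x.val α else σ.val (α - x.len)
  canon := by
    intro α hα
    have h1 : ¬ α < x.len := not_lt.2 (le_trans (le_self_add : x.len ≤ x.len + σ.len) hα)
    show (if α < x.len then x.val α else σ.val (α - x.len)) = false
    rw [if_neg h1]
    apply σ.canon
    by_contra h2
    rw [not_le] at h2
    have h3 : α ≤ x.len + (α - x.len) := Ordinal.le_add_sub α x.len
    have h4 : x.len + (α - x.len) < x.len + σ.len := (add_lt_add_iff_left x.len).2 h2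
    exact absurd hα (not_le.2 (lt_of_le_of_lt h3 h4))

/-- A subtree of `2^{<ω₁}` that is downward closed, twinned and has no maximal elements. -/
structure GoodTree (Γ : Set Node) : Prop where
  lt_omega1 : ∀ σ ∈ Γ, σ.len < omega1
  downward : ∀ σ ∈ Γ, ∀ β ≤ σ.len, σ.restrict β ∈ Γ
  twinned : ∀ σ ∈ Γ, σ.dagger ∈ Γ
  noMax : ∀ σ ∈ Γ, ∃ τ ∈ Γ, σ.len < τ.len ∧ τ.Extends σ

/-- `X(Γ)`: the maximal branches of `Γ`, i.e. the minimal elements of `2^{≤ω₁} ∖ Γ`. -/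
def XGamma (Γ : Set Node) : Set Node :=
  { x | x.len ≤ omega1 ∧ x ∉ Γ ∧ ∀ β < x.len, x.restrict β ∈ Γ }

/-- The index domain of the branch sequence `A_{Γ,x}`. -/
def branchDomain (Γ : Set Node) (x : Node) : Set Ordinal :=
  { α | α + 1 ≤ x.len ∧ x.restrict (α + 1) ∈ Γ }

/-- The branch sequence `A_{Γ,x}`, `a^x_α = a_{x ↾ (α+1)}`. -/
def branchSeq (a : Node → Set ℕ) (x : Node) : Ordinal → Set ℕ :=
  fun α => a (x.restrict (α + 1))

/-- A `𝕋`-algebra on the tree `Γ`. -/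
structure IsTAlgebra (Γ : Set Node) (a : Node → Set ℕ) : Prop where
  tree : GoodTree Γ
  empty_of_not_succ : ∀ σ ∈ Γ, ¬ IsSucc σ.len → a σ = ∅
  compl_dagger : ∀ σ ∈ Γ, IsSucc σ.len → a σ.dagger = (a σ)ᶜ
  branch_coherent : ∀ x : Node, x.len ≤ omega1 →
    CoherentOn (branchDomain Γ x) (branchSeq a x)
  branch_proper : ∀ x : Node, x.len ≤ omega1 →
    ProperOn (branchDomain Γ x) (branchSeq a x)

/-- The Boolean subalgebra of `P(ℕ)` generated by a family `G`. -/
inductive GenBool (G : Set (Set ℕ)) : Set ℕ → Prop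
  | basic (s : Set ℕ) : s ∈ G → GenBool G s
  | empty : GenBool G ∅
  | compl (s : Set ℕ) : GenBool G s → GenBool G sᶜ
  | inter (s t : Set ℕ) : GenBool G s → GenBool G t → GenBool G (s ∩ t)

/-- `B_Γ`: the Boolean subalgebra of `P(ℕ)` generated by `{a_σ : σ ∈ Γ}`. -/
def BGamma (Γ : Set Node) (a : Node → Set ℕ) : Set (Set ℕ) :=
  { b | GenBool { s | ∃ σ ∈ Γ, s = a σ } b }

/-- A finite intersection from the family `{ℕ ∖ a_{x↾(α+1)} : α + 1 ≤ λ_x}`. -/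
def finInterCompl (a : Node → Set ℕ) (x : Node) (F : Finset Ordinal) : Set ℕ :=
  ⋂ α ∈ F, (a (x.restrict (α + 1)))ᶜ

/-- The ultrafilter `U_x` on `B_Γ` generated by the finite intersections of
`{ℕ ∖ a_{x↾(α+1)} : α + 1 ≤ λ_x}`. -/
def Ux (Γ : Set Node) (a : Node → Set ℕ) (x : Node) : Set (Set ℕ) :=
  { b | b ∈ BGamma Γ a ∧
    ∃ F : Finset Ordinal, (∀ α ∈ F, α + 1 ≤ x.len) ∧ finInterCompl a x F ⊆ b }

/-- The Stone topology on `X(Γ)`, with subbasic open sets `{z : b ∈ U_z}`, `b ∈ B_Γ`. -/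
def stoneTop (Γ : Set Node) (a : Node → Set ℕ) :
    TopologicalSpace {z : Node // z ∈ XGamma Γ} :=
  TopologicalSpace.generateFrom
    { s | ∃ b ∈ BGamma Γ a, s = { z : {z : Node // z ∈ XGamma Γ} | b ∈ Ux Γ a z.1 } }

/-- An ultrafilter on a Boolean subalgebra `B` of `P(ℕ)`. -/
def IsUltrafilterOn (B U : Set (Set ℕ)) : Prop :=
  U ⊆ B ∧
  (∀ s ∈ U, ∀ t ∈ U, s ∩ t ∈ U) ∧
  (∀ s ∈ U, ∀ t ∈ B, s ⊆ t → t ∈ U) ∧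
  ∅ ∉ U ∧
  (∀ b ∈ B, Xor' (b ∈ U) (bᶜ ∈ U))

/-- The length-lexicographic (strict) order on finite binary strings. -/
def LenLexLT (σ τ : Node) : Prop :=
  σ.len < τ.len ∨ (σ.len = τ.len ∧ ∃ i < σ.len, σ.val i = false ∧ τ.val i = true ∧
    ∀ j < i, σ.val j = τ.val j)

/-- `e` is the standard length-lexicographic enumeration of `2^{<ω}`. -/
def IsStdEnum (e : ℕ → Node) : Prop :=
  (∀ k, (e k).len < Ordinal.omega0) ∧
  (∀ σ : Node, σ.len < Ordinal.omega0 → ∃ k, e k = σ) ∧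
  (∀ k l : ℕ, k < l → LenLexLT (e k) (e l))

/-- `⋃_{k<n} c^x_k` where `c^x_n = a^x_{e(n)} ∖ ⋃_{k<n} c^x_k` (recursively). -/
def cUnion (a : Node → Set ℕ) (x : Node) (eb : ℕ → Ordinal) : ℕ → Set ℕ
  | 0 => ∅
  | n + 1 => cUnion a x eb n ∪ (a (x.restrict (eb n + 1)) \ cUnion a x eb n)

/-- `c^x_n = a^x_{e(n)} ∖ ⋃_{k<n} c^x_k`. -/
def cSeq (a : Node → Set ℕ) (x : Node) (eb : ℕ → Ordinal) (n : ℕ) : Set ℕ :=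
  a (x.restrict (eb n + 1)) \ cUnion a x eb n

/-- `{x ⌢ σ : σ ∈ 2^{<ω}}`. -/
def appendSet (x : Node) : Set Node :=
  { τ | ∃ σ : Node, σ.len < Ordinal.omega0 ∧ τ = x.append σ }

/-- The defining equations of the extension `A_Γ[π,x]`:
`a_x = ∅`, `a_{x⌢(σ⌢0)} = ⋃{c^x_k : σ⌢1 ⊆ σ_{π(k)}}`, `a_{x⌢(σ⌢1)} = ℕ ∖ a_{x⌢(σ⌢0)}`. -/
def ExtEquations (e : ℕ → Node) (π : ℕ → ℕ) (a : Node → Set ℕ) (x : Node)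
    (eb : ℕ → Ordinal) (a' : Node → Set ℕ) : Prop :=
  a' x = ∅ ∧
  ∀ σ : Node, σ.len < Ordinal.omega0 →
    (a' (x.append (σ.snoc false)) =
      ⋃ k ∈ { k : ℕ | (e (π k)).Extends (σ.snoc true) }, cSeq a x eb k) ∧
    (a' (x.append (σ.snoc true)) = (a' (x.append (σ.snoc false)))ᶜ)

/-- The full tree `2^{<ω₁}`. -/
def GammaFull : Set Node := { σ | σ.len < omega1 }

theorem natLtOmega1 (n : ℕ) : (n : Ordinal) < omega1 := by
  have h1 : (n : Ordinal) < Ordinal.omega0 := Ordinal.nat_lt_omega0 n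
  have h2 : Ordinal.omega0 < omega1 := by
    rw [omega1, ← Cardinal.ord_aleph0]
    exact Cardinal.ord_lt_ord.2 (by rw [← Cardinal.aleph_zero]
                                    exact Cardinal.aleph_lt_aleph.2 zero_lt_one)
  exact h1.trans h2


/-! ### Auxiliary lemmas -/

theorem omega1_isLimit : Order.IsSuccLimit omega1 := Cardinal.isSuccLimit_ord (Cardinal.aleph0_le_aleph 1)

theorem succ_lt_omega1 {α : Ordinal} (h : α < omega1) : α + 1 < omega1 := by
  rw [Ordinal.add_one_eq_succ]; exact omega1_isLimit.succ_lt h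

theorem lt_self_add_one (α : Ordinal) : α < α + 1 := by
  rw [Ordinal.add_one_eq_succ]; exact Order.lt_succ α

theorem mem_unionFin {b : Ordinal → Set ℕ} {F : Finset Ordinal} {m : ℕ} :
    m ∈ unionFin b F ↔ ∃ γ ∈ F, m ∈ b γ := by simp [unionFin]

theorem unionFin_mono {b : Ordinal → Set ℕ} {F G : Finset Ordinal} (h : F ⊆ G) :
    unionFin b F ⊆ unionFin b G := by
  intro m hm
  obtain ⟨γ, hγ, hmγ⟩ := mem_unionFin.1 hm
  exact mem_unionFin.2 ⟨γ, h hγ, hmγ⟩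

theorem mem_hatA_self (b : Ordinal → Set ℕ) (β : Ordinal) : β ∈ hatA b β :=
  ⟨le_rfl, ∅, by simp, by simp [unionFin]⟩

theorem hatA_of_subset {b : Ordinal → Set ℕ} {α β : Ordinal} (hle : α ≤ β)
    {F : Finset Ordinal} (hF : ∀ γ ∈ F, γ < α) (h : b α ⊆ b β ∪ unionFin b F) :
    α ∈ hatA b β := by
  refine ⟨hle, F, hF, ?_⟩
  intro m hm
  rcases h hm.1 with h' | h'
  · exact absurd h' hm.2
  · exact h'

theorem perp_of_not_hatA {b : Ordinal → Set ℕ}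
    (hcoh' : ∀ α β : Ordinal, α ≤ β → β < omega1 →
      ∃ F : Finset Ordinal, (∀ γ ∈ F, γ < α) ∧
        (b α ∩ b β ⊆ unionFin b F ∨ b α ⊆ b β ∪ unionFin b F))
    {α β : Ordinal} (hle : α ≤ β) (hβ : β < omega1) (hnot : α ∉ hatA b β) :
    ∃ F : Finset Ordinal, (∀ γ ∈ F, γ < α) ∧ b α ∩ b β ⊆ unionFin b F := by
  obtain ⟨F, hF, h⟩ := hcoh' α β hle hβ
  rcases h with h | h
  · exact ⟨F, hF, h⟩
  · exact absurd (hatA_of_subset hle hF h) hnot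

theorem absorb (b : Ordinal → Set ℕ) (α : Ordinal) (F2 : Finset Ordinal) :
    (∀ ξ ∈ F2, ξ < α ∨ ∃ G : Finset Ordinal, (∀ γ ∈ G, γ < α) ∧ b α ∩ b ξ ⊆ unionFin b G) →
    ∃ H : Finset Ordinal, (∀ γ ∈ H, γ < α) ∧ b α ∩ unionFin b F2 ⊆ unionFin b H := by
  classical
  induction F2 using Finset.induction with
  | empty => exact fun _ => ⟨∅, by simp, by simp [unionFin]⟩
  | @insert ξ s hξs ih =>
    intro habs
    obtain ⟨H1, hH1, hs1⟩ := ih (fun ζ hζ => habs ζ (Finset.mem_insert_of_mem hζ))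
    rcases habs ξ (Finset.mem_insert_self ξ s) with hlt | ⟨G, hG, hGsub⟩
    · refine ⟨insert ξ H1, ?_, ?_⟩
      · intro γ hγ
        rcases Finset.mem_insert.1 hγ with rfl | hγ
        · exact hlt
        · exact hH1 γ hγ
      · rintro m ⟨hma, hmu⟩
        rw [unionFin, Finset.set_biUnion_insert] at hmu
        rcases hmu with hmu | hmu
        · exact mem_unionFin.2 ⟨ξ, Finset.mem_insert_self _ _, hmu⟩
        · exact unionFin_mono (Finset.subset_insert _ _) (hs1 ⟨hma, hmu⟩)
    · refine ⟨G ∪ H1, ?_, ?_⟩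
      · intro γ hγ
        rcases Finset.mem_union.1 hγ with hγ | hγ
        · exact hG γ hγ
        · exact hH1 γ hγ
      · rintro m ⟨hma, hmu⟩
        rw [unionFin, Finset.set_biUnion_insert] at hmu
        rcases hmu with hmu | hmu
        · exact unionFin_mono Finset.subset_union_left (hGsub ⟨hma, hmu⟩)
        · exact unionFin_mono Finset.subset_union_right (hs1 ⟨hma, hmu⟩)

theorem coverContra (b : Ordinal → Set ℕ) (α : Ordinal)
    (hprop : ∀ F : Finset Ordinal, (∀ γ ∈ F, γ < α) → ¬ b α ⊆ unionFin b F)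
    (F1 F2 F3 : Finset Ordinal)
    (h1 : ∀ γ ∈ F1, γ < α) (h3 : ∀ γ ∈ F3, γ < α)
    (habs : ∀ ξ ∈ F2, ξ < α ∨ ∃ G : Finset Ordinal, (∀ γ ∈ G, γ < α) ∧ b α ∩ b ξ ⊆ unionFin b G)
    (hcov : ∀ m ∈ b α, m ∈ unionFin b F1 ∨ m ∈ unionFin b F3 ∨ (m ∈ b α ∧ m ∈ unionFin b F2)) :
    False := by
  classical
  obtain ⟨H, hH, hHsub⟩ := absorb b α F2 habs
  apply hprop (F1 ∪ F3 ∪ H) ?_ ?_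
  · intro γ hγ
    rcases Finset.mem_union.1 hγ with hγ | hγ
    · rcases Finset.mem_union.1 hγ with hγ | hγ
      · exact h1 γ hγ
      · exact h3 γ hγ
    · exact hH γ hγ
  · intro m hm
    rcases hcov m hm with h | h | h
    · exact unionFin_mono (Finset.subset_union_left.trans Finset.subset_union_left) h
    · exact unionFin_mono (Finset.subset_union_right.trans Finset.subset_union_left) h
    · exact unionFin_mono Finset.subset_union_right (hHsub ⟨h.1, h.2⟩)

theorem badN (b : Ordinal → Set ℕ)
    (hcoh' : ∀ α β : Ordinal, α ≤ β → β < omega1 →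
      ∃ F : Finset Ordinal, (∀ γ ∈ F, γ < α) ∧
        (b α ∩ b β ⊆ unionFin b F ∨ b α ⊆ b β ∪ unionFin b F))
    (hprop' : ∀ β : Ordinal, β < omega1 → ∀ F : Finset Ordinal, (∀ γ ∈ F, γ < β) →
      ¬ b β ⊆ unionFin b F)
    (γ0 : Ordinal) (hγ0 : γ0 < omega1)
    (α : Ordinal) (hα : α < omega1)
    (hα0 : α ∈ hatA b γ0)
    (F2 : Finset Ordinal) (hF2lt : ∀ ξ ∈ F2, ξ < γ0)
    (hnomem : ∀ ξ ∈ F2, α ∉ hatA b ξ)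
    (F3 : Finset Ordinal) (hF3 : ∀ γ ∈ F3, γ < α)
    (hcovmid : ∀ m, m ∈ b α → m ∈ b γ0 → m ∈ unionFin b F3 ∨ m ∈ unionFin b F2) : False := by
  obtain ⟨hle0, F1, hF1lt, hF1sub⟩ := hα0
  refine coverContra b α (hprop' α hα) F1 F2 F3 hF1lt hF3 ?_ ?_
  · intro ξ hξ
    by_cases hc : ξ < α
    · exact Or.inl hc
    · refine Or.inr (perp_of_not_hatA hcoh' (not_lt.1 hc) ((hF2lt ξ hξ).trans hγ0) (hnomem ξ hξ))
  · intro m hm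
    by_cases h0 : m ∈ b γ0
    · rcases hcovmid m hm h0 with h | h
      · exact Or.inr (Or.inl h)
      · exact Or.inr (Or.inr ⟨hm, h⟩)
    · exact Or.inl (hF1sub ⟨hm, h0⟩)
theorem Node.ext' {σ τ : Node} (h1 : σ.len = τ.len) (h2 : σ.val = τ.val) : σ = τ := by
  cases σ; cases τ
  dsimp at h1 h2
  subst h1; subst h2
  rfl

theorem lt_add_one_iff' {α β : Ordinal} : α < β + 1 ↔ α ≤ β := by
  rw [Ordinal.add_one_eq_succ, Order.lt_succ_iff]

/-- The node `x` with bit flipped at `δ`. -/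
def flipNode (x : Node) (hx : x.len = omega1) (δ : Ordinal) (hδ : δ < omega1) : Node where
  len := omega1
  val := fun η => if η = δ then !(x.val η) else x.val η
  canon := by
    intro η hη
    show (if η = δ then !(x.val η) else x.val η) = false
    rw [if_neg, x.canon η (le_of_eq_of_le hx hη)]
    rintro rfl
    exact absurd hη (not_le.2 hδ)

theorem flipNode_restrict_lt {x : Node} (hx : x.len = omega1) {δ : Ordinal} (hδ : δ < omega1)
    {η : Ordinal} (hη : η < δ) :
    (flipNode x hx δ hδ).restrict (η + 1) = x.restrict (η + 1) := by
  apply Node.ext'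
  · rfl
  funext γ
  show (if γ < η + 1 then (flipNode x hx δ hδ).val γ else false) =
    (if γ < η + 1 then x.val γ else false)
  by_cases hc : γ < η + 1
  · rw [if_pos hc, if_pos hc]
    show (if γ = δ then !(x.val γ) else x.val γ) = x.val γ
    rw [if_neg]
    rintro rfl
    exact absurd (lt_add_one_iff'.1 hc) (not_le.2 hη)
  · rw [if_neg hc, if_neg hc]

theorem flipNode_restrict_eq {x : Node} (hx : x.len = omega1) {δ : Ordinal} (hδ : δ < omega1) :
    (flipNode x hx δ hδ).restrict (δ + 1) = (x.restrict (δ + 1)).dagger := by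
  have hsucc : IsSucc (x.restrict (δ + 1)).len := ⟨δ, rfl⟩
  rw [Node.dagger, dif_pos hsucc]
  have hch : Classical.choose hsucc = δ := by
    have hspec : δ + 1 = Classical.choose hsucc + 1 := Classical.choose_spec hsucc
    generalize hgen : Classical.choose hsucc = c at hspec ⊢
    rw [Ordinal.add_one_eq_succ, Ordinal.add_one_eq_succ] at hspec
    exact (Order.succ_eq_succ_iff.1 hspec).symm
  apply Node.ext'
  · rfl
  funext γ
  show (if γ < δ + 1 then (flipNode x hx δ hδ).val γ else false) =
    (if γ = Classical.choose hsucc then !((x.restrict (δ+1)).val γ) else (x.restrict (δ+1)).val γ)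
  rw [hch]
  by_cases hc : γ = δ
  · subst hc
    rw [if_pos (lt_self_add_one γ), if_pos rfl]
    show (if γ = γ then !(x.val γ) else x.val γ) = !((x.restrict (γ+1)).val γ)
    rw [if_pos rfl]
    show _ = !(if γ < γ + 1 then x.val γ else false)
    rw [if_pos (lt_self_add_one γ)]
  · rw [if_neg hc]
    show _ = (if γ < δ + 1 then x.val γ else false)
    by_cases hc2 : γ < δ + 1
    · rw [if_pos hc2, if_pos hc2]
      show (if γ = δ then !(x.val γ) else x.val γ) = x.val γ
      rw [if_neg hc]
    · rw [if_neg hc2, if_neg hc2]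

theorem finInterCompl_anti (a : Node → Set ℕ) (w : Node) {F G : Finset Ordinal} (h : F ⊆ G) :
    finInterCompl a w G ⊆ finInterCompl a w F := by
  intro m hm
  simp only [finInterCompl, Set.mem_iInter] at hm ⊢
  exact fun η hη => hm η (h hη)

/-- Extraction of an injective subsequence when all fibers are finite. -/
theorem exists_injective_subseq {X : Type*} (f : ℕ → X) (hfib : ∀ v : X, {n | f n = v}.Finite) :
    ∃ g : ℕ → ℕ, StrictMono g ∧ Function.Injective (fun n => f (g n)) := by
  classical
  set R : ℕ → Prop := fun n => ∀ m < n, f m ≠ f n with hR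
  have hRinf : (setOf R).Infinite := by
    by_contra hfin
    rw [Set.not_infinite] at hfin
    have hcov : (Set.univ : Set ℕ) ⊆ ⋃ r ∈ setOf R, {m | f m = f r} := by
      intro m _
      have hex : ∃ k, f k = f m := ⟨m, rfl⟩
      refine Set.mem_biUnion (show R (Nat.find hex) from ?_) ?_
      · intro j hj hjeq
        have : f j = f m := hjeq.trans (Nat.find_spec hex)
        exact Nat.find_min hex hj this
      · exact (Nat.find_spec hex).symm
    exact Set.infinite_univ (Set.Finite.subset (hfin.biUnion (fun r _ => hfib (f r))) hcov)
  refine ⟨Nat.nth R, Nat.nth_strictMono hRinf, ?_⟩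
  have hmem : ∀ n, R (Nat.nth R n) := Nat.nth_mem_of_infinite hRinf
  have hne : ∀ i j, i < j → f (Nat.nth R i) ≠ f (Nat.nth R j) :=
    fun i j hij => hmem j (Nat.nth R i) ((Nat.nth_strictMono hRinf) hij)
  intro i j hij
  rcases lt_trichotomy i j with h | h | h
  · exact absurd hij (hne i j h)
  · exact h
  · exact absurd hij.symm (hne j i h)
theorem branchDomain_full {x : Node} (hx : x.len = omega1) {β : Ordinal} (hβ : β < omega1) :
    β ∈ branchDomain GammaFull x := by
  constructor
  · rw [hx]; exact (succ_lt_omega1 hβ).le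
  · show (x.restrict (β + 1)).len < omega1
    exact succ_lt_omega1 hβ

theorem coh_x {a : Node → Set ℕ} (hT : IsTAlgebra GammaFull a) {x : Node} (hx : x.len = omega1) :
    ∀ α β : Ordinal, α ≤ β → β < omega1 →
      ∃ F : Finset Ordinal, (∀ γ ∈ F, γ < α) ∧
        (branchSeq a x α ∩ branchSeq a x β ⊆ unionFin (branchSeq a x) F ∨
          branchSeq a x α ⊆ branchSeq a x β ∪ unionFin (branchSeq a x) F) :=
  fun α β h1 h2 => hT.branch_coherent x hx.le α β h1 (branchDomain_full hx h2)

theorem prop_x {a : Node → Set ℕ} (hT : IsTAlgebra GammaFull a) {x : Node} (hx : x.len = omega1) :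
    ∀ β : Ordinal, β < omega1 → ∀ F : Finset Ordinal, (∀ γ ∈ F, γ < β) →
      ¬ branchSeq a x β ⊆ unionFin (branchSeq a x) F :=
  fun β h2 => hT.branch_proper x hx.le β (branchDomain_full hx h2)

theorem mem_XGamma_of_len {x : Node} (hx : x.len = omega1) : x ∈ XGamma GammaFull := by
  refine ⟨hx.le, ?_, ?_⟩
  · show ¬ x.len < omega1
    rw [hx]; exact lt_irrefl _
  · intro β hβ
    show (x.restrict β).len < omega1
    exact hx ▸ hβ

/-- In the Stone topology, the flipped branches converge to `x`;
this contradicts `hnoconv` when the flipping ordinals are injective. -/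
theorem stone_contra (a : Node → Set ℕ) (hT : IsTAlgebra GammaFull a)
    (hnoconv : ∀ (u : ℕ → {z : Node // z ∈ XGamma GammaFull}), Function.Injective u →
      ∀ z : {z : Node // z ∈ XGamma GammaFull},
        ¬ Filter.Tendsto u Filter.atTop (@nhds _ (stoneTop GammaFull a) z))
    (x : Node) (hx : x.len = omega1) (α : ℕ → Ordinal) (hαlt : ∀ n, α n < omega1)
    (hαinj : Function.Injective α)
    (hαev : ∀ γ : Ordinal, γ < omega1 → ∀ᶠ n in Filter.atTop, α n ∉ hatA (branchSeq a x) γ) :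
    False := by
  classical
  set b := branchSeq a x with hbdef
  let z : ℕ → Node := fun n => flipNode x hx (α n) (hαlt n)
  have hzlen : ∀ n, (z n).len = omega1 := fun n => rfl
  have hzX : ∀ n, z n ∈ XGamma GammaFull := fun n => mem_XGamma_of_len (hzlen n)
  have hz_a_eq : ∀ n, a ((z n).restrict (α n + 1)) = (a (x.restrict (α n + 1)))ᶜ := by
    intro n
    rw [show (z n).restrict (α n + 1) = (x.restrict (α n + 1)).dagger from
      flipNode_restrict_eq hx (hαlt n)]
    exact hT.compl_dagger _ (show (x.restrict (α n + 1)).len < omega1 from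
      succ_lt_omega1 (hαlt n)) ⟨α n, rfl⟩
  -- per-ordinal witness
  have per : ∀ n (γ : Ordinal), γ < omega1 → α n ∉ hatA b γ →
      ∃ H : Finset Ordinal, (∀ η ∈ H, η < omega1) ∧
        finInterCompl a (z n) H ⊆ (a (x.restrict (γ + 1)))ᶜ := by
    intro n γ hγ hnot
    by_cases hlt : γ < α n
    · refine ⟨{γ}, by simpa using hγ, ?_⟩
      rw [finInterCompl, Finset.set_biInter_singleton,
        flipNode_restrict_lt hx (hαlt n) hlt]
    · have hle : α n ≤ γ := not_lt.1 hlt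
      obtain ⟨F, hFlt, hFsub⟩ := perp_of_not_hatA (coh_x hT hx) hle hγ hnot
      refine ⟨insert (α n) F, ?_, ?_⟩
      · intro η hη
        rcases Finset.mem_insert.1 hη with rfl | hη
        · exact hαlt n
        · exact (hFlt η hη).trans (hαlt n)
      · intro m hm
        simp only [finInterCompl, Set.mem_iInter] at hm
        intro hmγ
        have hmα : m ∈ b (α n) := by
          have h1 := hm (α n) (Finset.mem_insert_self _ _)
          rw [hz_a_eq n] at h1
          exact Set.not_notMem.1 h1
        obtain ⟨η, hηF, hmη⟩ := mem_unionFin.1 (hFsub ⟨hmα, hmγ⟩)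
        have h2 := hm η (Finset.mem_insert_of_mem hηF)
        rw [flipNode_restrict_lt hx (hαlt n) (hFlt η hηF)] at h2
        exact h2 hmη
  -- combination over a finite set of ordinals
  have comb : ∀ n (G : Finset Ordinal), (∀ γ ∈ G, γ < omega1 ∧ α n ∉ hatA b γ) →
      ∃ H : Finset Ordinal, (∀ η ∈ H, η < omega1) ∧
        finInterCompl a (z n) H ⊆ finInterCompl a x G := by
    intro n G
    induction G using Finset.induction with
    | empty => exact fun _ => ⟨∅, by simp, by simp [finInterCompl]⟩
    | @insert γ s hγs ih =>
      intro hG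
      obtain ⟨H1, h1, hs1⟩ := ih (fun ζ hζ => hG ζ (Finset.mem_insert_of_mem hζ))
      obtain ⟨H2, h2, hs2⟩ := per n γ (hG γ (Finset.mem_insert_self _ _)).1
        (hG γ (Finset.mem_insert_self _ _)).2
      refine ⟨H2 ∪ H1, ?_, ?_⟩
      · intro η hη
        rcases Finset.mem_union.1 hη with hη | hη
        · exact h2 η hη
        · exact h1 η hη
      · intro m hm
        rw [finInterCompl, Finset.set_biInter_insert]
        exact ⟨hs2 (finInterCompl_anti a (z n) Finset.subset_union_left hm),
          hs1 (finInterCompl_anti a (z n) Finset.subset_union_right hm)⟩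
  -- the sequence and its limit
  let u : ℕ → {w : Node // w ∈ XGamma GammaFull} := fun n => ⟨z n, hzX n⟩
  have uinj : Function.Injective u := by
    intro i j hij
    by_contra hne
    have hαne : α i ≠ α j := fun h => hne (hαinj h)
    have hzeq : z i = z j := Subtype.ext_iff.1 hij
    have h1 : (z i).val (α i) = !(x.val (α i)) := if_pos rfl
    have h2 : (z j).val (α i) = x.val (α i) := if_neg hαne
    rw [hzeq, h2] at h1
    exact (Bool.eq_not_self _).1 h1
  have hconv : Filter.Tendsto u Filter.atTop
      (@nhds _ (stoneTop GammaFull a) ⟨x, mem_XGamma_of_len hx⟩) := by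
    rw [stoneTop, TopologicalSpace.tendsto_nhds_generateFrom_iff]
    rintro s ⟨bb, hbb, rfl⟩ hzs
    simp only [Set.mem_setOf_eq] at hzs
    show ∀ᶠ n in Filter.atTop, u n ∈ {w : {w : Node // w ∈ XGamma GammaFull} | bb ∈ Ux GammaFull a w.1}
    obtain ⟨hbBG, Fb, hFb, hFbsub⟩ := hzs
    have hFblt : ∀ γ ∈ Fb, γ < omega1 := by
      intro γ hγ
      exact lt_of_lt_of_le (lt_self_add_one γ) (hx ▸ hFb γ hγ)
    have hev : ∀ᶠ n in Filter.atTop, ∀ γ ∈ Fb, α n ∉ hatA b γ := by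
      rw [Filter.eventually_all_finset]
      intro γ hγ
      exact hαev γ (hFblt γ hγ)
    refine hev.mono ?_
    intro n hn
    show bb ∈ Ux GammaFull a (z n)
    obtain ⟨H, hH, hHsub⟩ := comb n Fb (fun γ hγ => ⟨hFblt γ hγ, hn γ hγ⟩)
    exact ⟨hbBG, H, fun η hη => (succ_lt_omega1 (hH η hη)).le, hHsub.trans hFbsub⟩
  exact hnoconv u uinj _ hconv
/-- If `A_Γ` is a `𝕋`-algebra on `Γ = 2^{<ω₁}` and no injective sequence converges
in the Stone topology on `X(Γ) = 2^{ω₁}`, then for every `x ∈ 2^{ω₁}` the space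
`Y_x` (the set `ω₁` with the topology inherited from `(ω₁+1, τ(A_{Γ,x}))`) is
sequentially compact. -/
theorem stmt16 (a : Node → Set ℕ) (hT : IsTAlgebra GammaFull a)
    (hnoconv : ∀ (u : ℕ → {z : Node // z ∈ XGamma GammaFull}), Function.Injective u →
      ∀ z : {z : Node // z ∈ XGamma GammaFull},
        ¬ Filter.Tendsto u Filter.atTop (@nhds _ (stoneTop GammaFull a) z)) :
    ∀ x : Node, x.len = omega1 →
      ∀ f : ℕ → {y : Ordinal // y < omega1},
        ∃ g : ℕ → ℕ, StrictMono g ∧ ∃ p : {y : Ordinal // y < omega1},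
          Filter.Tendsto (f ∘ g) Filter.atTop (@nhds _ (tauSub (branchSeq a x)) p) := by
  classical
  intro x hx f
  set b := branchSeq a x with hbdef
  have hcoh' := coh_x hT hx
  have hprop' := prop_x hT hx
  set S : Set Ordinal := {γ | γ < omega1 ∧ {n : ℕ | (f n).1 ∈ hatA b γ}.Infinite} with hSdef
  by_cases hSne : S.Nonempty
  · -- a least `γ0` capturing infinitely many terms exists; converge to it
    have hγ0S : wellFounded_lt.min S hSne ∈ S := wellFounded_lt.min_mem S hSne
    set γ0 := wellFounded_lt.min S hSne with hγ0def
    obtain ⟨hγ0lt, hγ0inf⟩ := hγ0S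
    have hmin : ∀ ξ, ξ < γ0 → ξ ∉ S :=
      fun ξ hξ hmem => wellFounded_lt.not_lt_min S hmem hξ
    have hfin_lt : ∀ ξ, ξ < γ0 → {n : ℕ | (f n).1 ∈ hatA b ξ}.Finite := by
      intro ξ hξ
      by_contra hinf
      exact hmin ξ hξ ⟨hξ.trans hγ0lt, hinf⟩
    have hPinf : (setOf (fun n => (f n).1 ∈ hatA b γ0)).Infinite := hγ0inf
    set g := Nat.nth (fun n => (f n).1 ∈ hatA b γ0) with hgdef
    have hgmono : StrictMono g := Nat.nth_strictMono hPinf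
    have hgmem : ∀ n, (f (g n)).1 ∈ hatA b γ0 := Nat.nth_mem_of_infinite hPinf
    have hpull : ∀ ξ, ξ < γ0 → {n : ℕ | (f (g n)).1 ∈ hatA b ξ}.Finite := by
      intro ξ hξ
      have heq : {n : ℕ | (f (g n)).1 ∈ hatA b ξ} = g ⁻¹' {m : ℕ | (f m).1 ∈ hatA b ξ} := rfl
      rw [heq]
      exact (hfin_lt ξ hξ).preimage hgmono.injective.injOn
    have EV1 : ∀ β, β < omega1 → γ0 ∈ hatA b β →
        {n : ℕ | (f (g n)).1 ∉ hatA b β}.Finite := by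
      intro β hβ hγ0β
      obtain ⟨hγ0le, F2, hF2lt, hF2sub⟩ := hγ0β
      rw [← Set.not_infinite]
      intro hinf
      have hBad : (⋃ ξ ∈ (F2 : Set Ordinal), {n : ℕ | (f (g n)).1 ∈ hatA b ξ}).Finite :=
        Set.Finite.biUnion F2.finite_toSet (fun ξ hξ => hpull ξ (hF2lt ξ hξ))
      obtain ⟨n, hn1, hn2⟩ := (hinf.diff hBad).nonempty
      simp only [Set.mem_setOf_eq] at hn1
      simp only [Set.mem_iUnion, Set.mem_setOf_eq, not_exists] at hn2
      have hle : (f (g n)).1 ≤ β := le_trans (hgmem n).1 hγ0le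
      obtain ⟨F3, hF3lt, hF3sub⟩ := perp_of_not_hatA hcoh' hle hβ hn1
      refine badN b hcoh' hprop' γ0 hγ0lt (f (g n)).1 (f (g n)).2 (hgmem n)
        F2 hF2lt (fun ξ hξ => hn2 ξ hξ) F3 hF3lt ?_
      intro m hm h0
      by_cases h1 : m ∈ b β
      · exact Or.inl (hF3sub ⟨hm, h1⟩)
      · exact Or.inr (hF2sub ⟨h0, h1⟩)
    have EV2 : ∀ β, β < omega1 → γ0 ∉ hatA b β →
        {n : ℕ | (f (g n)).1 ∈ hatA b β}.Finite := by
      intro β hβ hnot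
      rw [← Set.not_infinite]
      intro hinf
      have hβS : β ∈ S := by
        refine ⟨hβ, ?_⟩
        have himg : g '' {n : ℕ | (f (g n)).1 ∈ hatA b β} ⊆ {m : ℕ | (f m).1 ∈ hatA b β} := by
          rintro m ⟨n, hn, rfl⟩
          exact hn
        exact ((hinf.image hgmono.injective.injOn).mono himg)
      have hγ0β : γ0 ≤ β := not_lt.1 (fun h => hmin β h hβS)
      obtain ⟨F, hFlt, hFsub⟩ := perp_of_not_hatA hcoh' hγ0β hβ hnot
      have hBad : (⋃ ξ ∈ (F : Set Ordinal), {n : ℕ | (f (g n)).1 ∈ hatA b ξ}).Finite :=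
        Set.Finite.biUnion F.finite_toSet (fun ξ hξ => hpull ξ (hFlt ξ hξ))
      obtain ⟨n, hn1, hn2⟩ := (hinf.diff hBad).nonempty
      simp only [Set.mem_setOf_eq] at hn1
      simp only [Set.mem_iUnion, Set.mem_setOf_eq, not_exists] at hn2
      obtain ⟨hleβ, F3, hF3lt, hF3sub⟩ := hn1
      refine badN b hcoh' hprop' γ0 hγ0lt (f (g n)).1 (f (g n)).2 (hgmem n)
        F hFlt (fun ξ hξ => hn2 ξ hξ) F3 hF3lt ?_
      intro m hm h0
      by_cases h1 : m ∈ b β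
      · exact Or.inr (hFsub ⟨h0, h1⟩)
      · exact Or.inl (hF3sub ⟨hm, h1⟩)
    refine ⟨g, hgmono, ⟨γ0, hγ0lt⟩, ?_⟩
    rw [tauSub, @nhds_induced _ _ (tau omega1 b) _ _, Filter.tendsto_comap_iff, tau,
      TopologicalSpace.tendsto_nhds_generateFrom_iff]
    rintro s ⟨β, hβlt, rfl | rfl⟩ hps
    · simp only [Set.mem_setOf_eq] at hps
      have hfin := EV1 β hβlt hps
      show ∀ᶠ n in Filter.atTop, (f (g n)).1 ∈ hatA b β
      rw [← Nat.cofinite_eq_atTop, Filter.eventually_cofinite]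
      exact hfin
    · simp only [Set.mem_compl_iff, Set.mem_setOf_eq] at hps
      have hfin := EV2 β hβlt hps
      show ∀ᶠ n in Filter.atTop, (f (g n)).1 ∉ hatA b β
      rw [← Nat.cofinite_eq_atTop, Filter.eventually_cofinite]
      simpa using hfin
  · -- no ordinal captures infinitely many terms: contradiction with `hnoconv`
    exfalso
    have hfin : ∀ γ, γ < omega1 → {n : ℕ | (f n).1 ∈ hatA b γ}.Finite := by
      intro γ hγ
      by_contra hinf
      exact hSne ⟨γ, hγ, hinf⟩
    have hfib : ∀ v : {y : Ordinal // y < omega1}, {n | f n = v}.Finite := by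
      intro v
      refine (hfin v.1 v.2).subset ?_
      intro n hn
      simp only [Set.mem_setOf_eq] at hn ⊢
      rw [hn]
      exact mem_hatA_self b v.1
    obtain ⟨g, hgmono, hginj⟩ := exists_injective_subseq f hfib
    refine stone_contra a hT hnoconv x hx (fun n => (f (g n)).1) (fun n => (f (g n)).2) ?_ ?_
    · intro i j hij
      exact hginj (Subtype.ext hij)
    · intro γ hγ
      have heq : {n : ℕ | (f (g n)).1 ∈ hatA b γ} = g ⁻¹' {m : ℕ | (f m).1 ∈ hatA b γ} := rfl
      have hfin2 : {n : ℕ | (f (g n)).1 ∈ hatA b γ}.Finite := by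
        rw [heq]
        exact (hfin γ hγ).preimage hgmono.injective.injOn
      rw [← Nat.cofinite_eq_atTop, Filter.eventually_cofinite]
      simpa using hfin2

end
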